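/- Let G be a finitely generated group and N ⊴ G a normal subgroup such that G/N is infinite cyclic. If G has polynomial growth of degree at most d, then N is finitely generated and has polynomial growth of degree at most d − 1. -/

import Mathlib

/-- Word length of `g` with respect to a generating set `S`:
the least `n` such that `g` is a product of `n` elements of `S ∪ S⁻¹`. -/
noncomputable def wordLength {G : Type*} [Group G] (S : Set G) (g : G) : ℕ :=
  sInf {n | ∃ l : List G, (∀ x ∈ l, x ∈ S ∨ x⁻¹ ∈ S) ∧ l.length = n ∧ l.prod = g}

/-- Growth function: number of elements of word length at most `n`. -/
noncomputable def growth {G : Type*} [Group G] (S : Set G) (n : ℕ) : ℕ :=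
  Nat.card {g : G | wordLength S g ≤ n}

namespace SplitAux

open Subgroup Pointwise

variable {G : Type*} [Group G]

lemma exists_rep {S : Set G} (hS : Subgroup.closure S = ⊤) (g : G) :
    ∃ l : List G, (∀ x ∈ l, x ∈ S ∨ x⁻¹ ∈ S) ∧ l.prod = g := by
  have hg : g ∈ Subgroup.closure S := hS ▸ Subgroup.mem_top g
  have hg' : g ∈ Submonoid.closure (S ∪ S⁻¹) := by
    have h2 : g ∈ (Subgroup.closure S).toSubmonoid := hg
    rwa [Subgroup.closure_toSubmonoid] at h2
  obtain ⟨l, hl, hp⟩ := Submonoid.exists_list_of_mem_closure hg'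
  exact ⟨l, fun x hx => by
    rcases hl x hx with h | h
    · exact Or.inl h
    · exact Or.inr (Set.mem_inv.mp h), hp⟩

lemma wordLength_le {S : Set G} {g : G} {l : List G}
    (hl : ∀ x ∈ l, x ∈ S ∨ x⁻¹ ∈ S) (hp : l.prod = g) :
    wordLength S g ≤ l.length :=
  Nat.sInf_le ⟨l, hl, rfl, hp⟩

lemma exists_min_rep {S : Set G} (hS : Subgroup.closure S = ⊤) (g : G) :
    ∃ l : List G, (∀ x ∈ l, x ∈ S ∨ x⁻¹ ∈ S) ∧ l.length = wordLength S g ∧ l.prod = g := by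
  obtain ⟨l, hl, hp⟩ := exists_rep hS g
  have hne : Set.Nonempty {n | ∃ l : List G, (∀ x ∈ l, x ∈ S ∨ x⁻¹ ∈ S) ∧ l.length = n ∧ l.prod = g} :=
    ⟨l.length, l, hl, rfl, hp⟩
  obtain ⟨l', h1, h2, h3⟩ := Nat.sInf_mem hne
  exact ⟨l', h1, h2, h3⟩

lemma wordLength_one (S : Set G) : wordLength S (1 : G) = 0 :=
  Nat.le_zero.mp (wordLength_le (l := []) (by simp) (by simp))

lemma wordLength_mul_le {S : Set G} (hS : Subgroup.closure S = ⊤) (g h : G) :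
    wordLength S (g * h) ≤ wordLength S g + wordLength S h := by
  obtain ⟨l, hl, hlen, hp⟩ := exists_min_rep hS g
  obtain ⟨l', hl', hlen', hp'⟩ := exists_min_rep hS h
  have := wordLength_le (l := l ++ l') (fun x hx => by
    rcases List.mem_append.mp hx with h | h
    · exact hl x h
    · exact hl' x h) (by rw [List.prod_append, hp, hp'])
  simpa [hlen, hlen'] using this

lemma wordLength_inv_le {S : Set G} (hS : Subgroup.closure S = ⊤) (g : G) :
    wordLength S g⁻¹ ≤ wordLength S g := by
  obtain ⟨l, hl, hlen, hp⟩ := exists_min_rep hS g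
  have := wordLength_le (l := (l.map fun x => x⁻¹).reverse) (fun x hx => by
    simp only [List.mem_reverse, List.mem_map] at hx
    obtain ⟨y, hy, rfl⟩ := hx
    rcases hl y hy with h | h
    · exact Or.inr (by simpa using h)
    · exact Or.inl h)
    (by rw [← List.prod_inv_reverse, hp])
  simpa [hlen] using this

lemma wordLength_pow_le {S : Set G} (hS : Subgroup.closure S = ⊤) (t : G) (k : ℕ) :
    wordLength S (t ^ k) ≤ k * wordLength S t := by
  induction k with
  | zero => simp [wordLength_one]
  | succ k ih =>
    calc wordLength S (t ^ (k + 1)) = wordLength S (t ^ k * t) := by rw [pow_succ]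
      _ ≤ wordLength S (t ^ k) + wordLength S t := wordLength_mul_le hS _ _
      _ ≤ k * wordLength S t + wordLength S t := by omega
      _ = (k + 1) * wordLength S t := by ring

lemma wordLength_zpow_le {S : Set G} (hS : Subgroup.closure S = ⊤) (t : G) (j : ℤ) :
    wordLength S (t ^ j) ≤ j.natAbs * wordLength S t := by
  rcases Int.natAbs_eq j with h | h
  · calc wordLength S (t ^ j) = wordLength S (t ^ j.natAbs) := by
          conv_lhs => rw [h, zpow_natCast]
      _ ≤ j.natAbs * wordLength S t := wordLength_pow_le hS t j.natAbs
  · calc wordLength S (t ^ j) = wordLength S ((t ^ j.natAbs)⁻¹) := by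
          conv_lhs => rw [h, zpow_neg, zpow_natCast]
      _ ≤ wordLength S (t ^ j.natAbs) := wordLength_inv_le hS _
      _ ≤ j.natAbs * wordLength S t := wordLength_pow_le hS t j.natAbs

lemma wordLength_list_prod_le {S : Set G} (hS : Subgroup.closure S = ⊤) (l : List G) (c : ℕ)
    (h : ∀ x ∈ l, wordLength S x ≤ c) :
    wordLength S l.prod ≤ l.length * c := by
  induction l with
  | nil => simp [wordLength_one]
  | cons y l ih =>
    calc wordLength S (y :: l).prod = wordLength S (y * l.prod) := by rw [List.prod_cons]
      _ ≤ wordLength S y + wordLength S l.prod := wordLength_mul_le hS _ _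
      _ ≤ c + l.length * c := by
          have h1 := ih (fun x hx => h x (List.mem_cons_of_mem _ hx))
          have h2 := h y (List.mem_cons_self)
          omega
      _ = (y :: l).length * c := by simp [List.length_cons]; ring

lemma ball_finite {S : Set G} (hS : Subgroup.closure S = ⊤) (hfin : S.Finite) (n : ℕ) :
    {g : G | wordLength S g ≤ n}.Finite := by
  induction n with
  | zero =>
    apply Set.Finite.subset (Set.finite_singleton (1 : G))
    intro g hg
    obtain ⟨l, hl, hlen, hp⟩ := exists_min_rep hS g
    have h0 : wordLength S g ≤ 0 := hg
    have : l = [] := List.length_eq_zero_iff.mp (by omega)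
    simp [this] at hp
    simp [← hp]
  | succ n ih =>
    have hsub : {g : G | wordLength S g ≤ n + 1} ⊆
        {g : G | wordLength S g ≤ n} * (S ∪ S⁻¹ ∪ {1}) := by
      intro g hg
      obtain ⟨l, hl, hlen, hp⟩ := exists_min_rep hS g
      rcases List.eq_nil_or_concat l with rfl | ⟨l', x, rfl⟩
      · refine ⟨1, by simp [wordLength_one], 1, by simp, by simp_all⟩
      · refine ⟨l'.prod, ?_, x, ?_, by rw [← hp, List.concat_eq_append, List.prod_append,
          List.prod_cons, List.prod_nil, mul_one]⟩
        · have h1 : wordLength S l'.prod ≤ l'.length :=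
            wordLength_le (fun y hy => hl y (by simp [hy])) rfl
          have h2 : wordLength S g ≤ n + 1 := hg
          rw [← hlen, List.length_concat] at h2
          simp only [Set.mem_setOf_eq]
          omega
        · rcases hl x (by simp) with h | h
          · exact Or.inl (Or.inl h)
          · exact Or.inl (Or.inr (Set.mem_inv.mpr h))
    exact Set.Finite.subset (Set.Finite.mul ih (hfin.union hfin.inv |>.union (Set.finite_singleton 1))) hsub

lemma le_growth {S : Set G} (hS : Subgroup.closure S = ⊤) (hfin : S.Finite)
    {α : Type*} [Finite α] (f : α → G) (hf : Function.Injective f) (n : ℕ)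
    (h : ∀ a, wordLength S (f a) ≤ n) :
    Nat.card α ≤ growth S n := by
  rw [← Nat.card_range_of_injective hf]
  exact Nat.card_mono (ball_finite hS hfin n) (by rintro x ⟨a, rfl⟩; exact h a)

lemma exists_exp_gt (k : ℕ) : ∀ a : ℕ, ∃ r : ℕ, 1 ≤ r ∧ a * r ^ k < 2 ^ r := by
  induction k with
  | zero =>
    intro a
    exact ⟨a + 1, by omega, by
      simpa using (Nat.lt_two_pow_self (n := a)).trans_le (Nat.pow_le_pow_right (by norm_num) (by omega))⟩
  | succ k ih =>
    intro a
    obtain ⟨s, hs1, hs⟩ := ih (a * 2 ^ (k + 1))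
    refine ⟨2 * s, by omega, ?_⟩
    calc a * (2 * s) ^ (k + 1) = a * 2 ^ (k + 1) * s ^ k * s := by ring
      _ < 2 ^ s * s := (Nat.mul_lt_mul_right (by omega)).mpr hs
      _ ≤ 2 ^ s * 2 ^ s := Nat.mul_le_mul_left _ (Nat.le_of_lt (Nat.lt_two_pow_self (n := s)))
      _ = 2 ^ (2 * s) := by rw [← pow_add, two_mul]


def conjC (t : G) (U : Set G) (m : ℕ) : Set G :=
  {g | ∃ j : ℤ, j.natAbs ≤ m ∧ ∃ x ∈ U, g = t ^ j * x * t ^ (-j)}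

lemma conjC_mono (t : G) (U : Set G) {m k : ℕ} (h : m ≤ k) : conjC t U m ⊆ conjC t U k := by
  rintro g ⟨j, hj, x, hx, rfl⟩
  exact ⟨j, hj.trans h, x, hx, rfl⟩

lemma H_mono (t : G) (U : Set G) {m k : ℕ} (h : m ≤ k) :
    Subgroup.closure (conjC t U m) ≤ Subgroup.closure (conjC t U k) :=
  Subgroup.closure_mono (conjC_mono t U h)

lemma conj_mem {t : G} {U : Set G} {m : ℕ} {c : G} (hc : c ∈ Subgroup.closure (conjC t U m))
    (j₀ : ℤ) (hj₀ : j₀.natAbs ≤ 1) :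
    t ^ j₀ * c * t ^ (-j₀) ∈ Subgroup.closure (conjC t U (m + 1)) := by
  have h1 : t ^ j₀ * c * t ^ (-j₀) = (MulAut.conj (t ^ j₀)).toMonoidHom c := by
    simp only [MulEquiv.coe_toMonoidHom, MulAut.conj_apply, zpow_neg]
  rw [h1]
  have h2 : (MulAut.conj (t ^ j₀)).toMonoidHom c ∈
      (Subgroup.closure (conjC t U m)).map (MulAut.conj (t ^ j₀)).toMonoidHom :=
    Subgroup.mem_map_of_mem _ hc
  rw [MonoidHom.map_closure] at h2
  refine Subgroup.closure_mono ?_ h2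
  rintro g ⟨_, ⟨j, hj, x, hx, rfl⟩, rfl⟩
  refine ⟨j₀ + j, by omega, x, hx, ?_⟩
  simp only [MulEquiv.coe_toMonoidHom, MulAut.conj_apply]
  rw [zpow_add, neg_add, zpow_add]
  group

lemma rewrite_lemma {t : G} {U : Set G} (l : List G)
    (hl : ∀ y ∈ l, y ∈ ({t} ∪ U : Set G) ∨ y⁻¹ ∈ ({t} ∪ U : Set G)) :
    ∃ e : ℤ, ∃ c ∈ Subgroup.closure (conjC t U l.length), l.prod = c * t ^ e := by
  induction l with
  | nil => exact ⟨0, 1, Subgroup.one_mem _, by simp⟩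
  | cons y l ih =>
    obtain ⟨e, c, hc, hp⟩ := ih (fun z hz => hl z (List.mem_cons_of_mem _ hz))
    have hcong : c ∈ Subgroup.closure (conjC t U (l.length + 1)) :=
      H_mono t U (Nat.le_succ _) hc
    rcases hl y (List.mem_cons_self) with hy | hy
    · rcases hy with hy | hy
      · -- y = t
        rw [Set.mem_singleton_iff] at hy
        subst hy
        refine ⟨e + 1, y ^ (1:ℤ) * c * y ^ (-1:ℤ), conj_mem hc 1 (by simp), ?_⟩
        rw [List.prod_cons, hp]
        rw [zpow_add]
        group
      · -- y ∈ U
        refine ⟨e, y * c, ?_, by rw [List.prod_cons, hp, mul_assoc]⟩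
        have hyU : y ∈ conjC t U (l.length + 1) := ⟨0, by simp, y, hy, by simp⟩
        exact Subgroup.mul_mem _ (Subgroup.subset_closure hyU) hcong
    · rcases hy with hy | hy
      · -- y⁻¹ = t
        rw [Set.mem_singleton_iff] at hy
        have hyt : y = t⁻¹ := by rw [← hy]; simp
        subst hyt
        refine ⟨e - 1, t ^ (-1:ℤ) * c * t ^ (-(-1):ℤ), conj_mem hc (-1) (by simp), ?_⟩
        rw [List.prod_cons, hp]
        rw [sub_eq_add_neg, zpow_add]
        group
      · -- y⁻¹ ∈ U
        refine ⟨e, y * c, ?_, by rw [List.prod_cons, hp, mul_assoc]⟩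
        have hyU : y⁻¹ ∈ conjC t U (l.length + 1) := ⟨0, by simp, y⁻¹, hy, by simp⟩
        exact Subgroup.mul_mem _
          (by simpa using Subgroup.inv_mem _ (Subgroup.subset_closure hyU)) hcong

lemma stabilize {t : G} {U : Set G} {m : ℕ}
    (hm : Subgroup.closure (conjC t U m) = Subgroup.closure (conjC t U (m + 1))) :
    ∀ k, Subgroup.closure (conjC t U (m + k)) = Subgroup.closure (conjC t U m) := by
  intro k
  induction k with
  | zero => rfl
  | succ k ih =>
    refine le_antisymm ?_ (H_mono t U (by omega))
    rw [Subgroup.closure_le]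
    rintro g ⟨j, hj, x, hx, rfl⟩
    by_cases hj' : j.natAbs ≤ m + k
    · have : (t ^ j * x * t ^ (-j)) ∈ Subgroup.closure (conjC t U (m + k)) :=
        Subgroup.subset_closure ⟨j, hj', x, hx, rfl⟩
      rw [ih] at this
      exact this
    · -- |j| = m + k + 1, peel one conjugation
      set j₀ : ℤ := if 0 < j then 1 else -1 with hj₀def
      have hj₀ : j₀.natAbs ≤ 1 := by rw [hj₀def]; split <;> simp
      have hinner : (j - j₀).natAbs ≤ m + k := by
        rw [hj₀def]; split <;> omega
      have h1 : t ^ (j - j₀) * x * t ^ (-(j - j₀)) ∈ Subgroup.closure (conjC t U (m + k)) :=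
        Subgroup.subset_closure ⟨j - j₀, hinner, x, hx, rfl⟩
      rw [ih] at h1
      have h2 := conj_mem h1 j₀ hj₀
      rw [← hm] at h2
      have h3 : t ^ j₀ * (t ^ (j - j₀) * x * t ^ (-(j - j₀))) * t ^ (-j₀)
          = t ^ j * x * t ^ (-j) := by
        rw [show j = j₀ + (j - j₀) by ring, neg_add, zpow_add, zpow_add]
        group
      rw [h3] at h2
      exact h2

end SplitAux


open SplitAux in
/-- Gromov's Splitting Lemma. -/
theorem splitting_lemma {G : Type*} [Group G]
    (A : Finset G) (hA : Subgroup.closure (A : Set G) = ⊤)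
    (N : Subgroup G) [N.Normal]
    (hcyc : Nonempty ((G ⧸ N) ≃* Multiplicative ℤ))
    (d : ℕ)
    (hpoly : ∃ C : ℕ, 0 < C ∧ ∀ n : ℕ, 1 ≤ n → growth (A : Set G) n ≤ C * n ^ d) :
    Group.FG N ∧
    ∀ B : Finset N, Subgroup.closure (B : Set N) = ⊤ →
      ∃ C : ℕ, 0 < C ∧ ∀ n : ℕ, 1 ≤ n →
        growth (B : Set N) n ≤ C * n ^ (d - 1) := by
  classical
  obtain ⟨C, hC, hgrow⟩ := hpoly
  obtain ⟨φ⟩ := hcyc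
  set π : G →* Multiplicative ℤ := φ.toMonoidHom.comp (QuotientGroup.mk' N) with hπdef
  have hker : ∀ g : G, π g = 1 ↔ g ∈ N := by
    intro g
    simp only [hπdef, MonoidHom.comp_apply, MulEquiv.coe_toMonoidHom]
    rw [MulEquiv.map_eq_one_iff]
    exact QuotientGroup.eq_one_iff g
  obtain ⟨t, ht⟩ : ∃ t : G, π t = Multiplicative.ofAdd 1 := by
    obtain ⟨q, hq⟩ := φ.surjective (Multiplicative.ofAdd 1)
    obtain ⟨t, rfl⟩ := QuotientGroup.mk'_surjective N q
    refine ⟨t, ?_⟩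
    simp only [hπdef, MonoidHom.comp_apply, MulEquiv.coe_toMonoidHom]
    exact hq
  set T := wordLength (A : Set G) t with hT
  set u : G → G := fun a => a * t ^ (-(Multiplicative.toAdd (π a))) with hu
  have hπu : ∀ a : G, π (u a) = 1 := by
    intro a
    have h1 : π (u a) = π a * (π t) ^ (-(Multiplicative.toAdd (π a))) := by
      simp [hu, map_mul, map_zpow]
    have h2 : Multiplicative.toAdd (π (u a)) = 0 := by
      rw [h1, ht]
      simp
    have := congrArg Multiplicative.ofAdd h2
    simpa using this
  have huN : ∀ a : G, u a ∈ N := fun a => (hker _).mp (hπu a)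
  set U : Set G := u '' (A : Set G) with hUdef
  have hUfin : U.Finite := A.finite_toSet.image _
  have hUN : U ⊆ (N : Set G) := by rintro _ ⟨a, _, rfl⟩; exact huN a
  have hgen : Subgroup.closure ({t} ∪ U) = ⊤ := by
    rw [eq_top_iff, ← hA, Subgroup.closure_le]
    intro a ha
    have h1 : u a ∈ Subgroup.closure ({t} ∪ U) :=
      Subgroup.subset_closure (Or.inr ⟨a, ha, rfl⟩)
    have h2 : t ∈ Subgroup.closure ({t} ∪ U) :=
      Subgroup.subset_closure (Or.inl rfl)
    have h3 : a = u a * t ^ (Multiplicative.toAdd (π a)) := by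
      rw [hu]; group
    rw [SetLike.mem_coe, h3]
    exact Subgroup.mul_mem _ h1 (Subgroup.zpow_mem _ h2 _)
  set R := A.sup (fun a => wordLength (A : Set G) (u a)) with hR
  have hUR : ∀ x ∈ U, wordLength (A : Set G) x ≤ R := by
    rintro _ ⟨a, ha, rfl⟩
    exact Finset.le_sup (f := fun a => wordLength (A : Set G) (u a)) ha
  have hHle : ∀ m, Subgroup.closure (conjC t U m) ≤ N := by
    intro m; rw [Subgroup.closure_le]
    rintro g ⟨j, hj, x, hx, rfl⟩
    have hxN : x ∈ N := hUN hx
    have := (inferInstance : N.Normal).conj_mem x hxN (t ^ j)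
    simpa [zpow_neg] using this
  have hcover : ∀ g ∈ N, ∃ m, g ∈ Subgroup.closure (conjC t U m) := by
    intro g hgN
    obtain ⟨l, hl, hp⟩ := exists_rep hgen g
    obtain ⟨e, c, hc, hpe⟩ := rewrite_lemma l hl
    have hcN : c ∈ N := hHle _ hc
    have hte : t ^ e ∈ N := by
      have h4 : t ^ e = c⁻¹ * g := by rw [← hp, hpe]; group
      rw [h4]; exact Subgroup.mul_mem _ (Subgroup.inv_mem _ hcN) hgN
    have he : e = 0 := by
      have h5 := (hker _).mpr hte
      rw [map_zpow, ht] at h5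
      have h6 := congrArg Multiplicative.toAdd h5
      simpa using h6
    rw [he] at hpe
    simp only [zpow_zero, mul_one] at hpe
    exact ⟨l.length, by rw [← hp, hpe]; exact hc⟩
  -- Part 1: N is finitely generated
  have hFG : Group.FG N := by
    by_cases hstab : ∃ m, Subgroup.closure (conjC t U m) = Subgroup.closure (conjC t U (m + 1))
    · obtain ⟨m, hm⟩ := hstab
      have hNeq : Subgroup.closure (conjC t U m) = N := by
        refine le_antisymm (hHle m) ?_
        intro g hgN
        obtain ⟨k, hk⟩ := hcover g hgN
        rcases le_or_gt k m with h | h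
        · exact H_mono t U h hk
        · have h7 := stabilize hm (k - m)
          rw [show m + (k - m) = k by omega] at h7
          rw [h7] at hk; exact hk
      have hfin : (conjC t U m).Finite := by
        have hsub : conjC t U m ⊆ (fun p : ℤ × G => t ^ p.1 * p.2 * t ^ (-p.1)) ''
            ((Set.Icc (-(m : ℤ)) m) ×ˢ U) := by
          rintro g ⟨j, hj, x, hx, rfl⟩
          exact ⟨(j, x), ⟨Set.mem_Icc.mpr ⟨by omega, by omega⟩, hx⟩, rfl⟩
        exact Set.Finite.subset (((Set.finite_Icc _ _).prod hUfin).image _) hsub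
      rw [Group.fg_iff_subgroup_fg, Subgroup.fg_iff]
      exact ⟨conjC t U m, hNeq, hfin⟩
    · exfalso
      push_neg at hstab
      have hpick : ∀ m : ℕ, ∃ g : G, g ∈ conjC t U (m + 1) ∧
          g ∉ Subgroup.closure (conjC t U m) := by
        intro m
        by_contra hno
        push_neg at hno
        exact hstab m (le_antisymm (H_mono t U (Nat.le_succ m))
          (by rw [Subgroup.closure_le]; intro g hgc; exact hno g hgc))
      choose gs hg1 hg2 using hpick
      -- injectivity
      have hpre : ∀ r : ℕ, ∀ κ : Fin (r + 1) → Bool,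
          (List.ofFn fun i : Fin r => if κ i.castSucc then gs (i : ℕ) else 1).prod
            ∈ Subgroup.closure (conjC t U r) := by
        intro r κ
        apply Subgroup.list_prod_mem
        intro x hx
        rw [List.mem_ofFn] at hx
        obtain ⟨i, rfl⟩ := hx
        try dsimp only
        split
        · exact H_mono t U i.2 (Subgroup.subset_closure (hg1 (i : ℕ)))
        · exact Subgroup.one_mem _
      have hInj : ∀ r : ℕ, Function.Injective
          (fun ε : Fin r → Bool => (List.ofFn fun i => if ε i then gs (i : ℕ) else 1).prod) := by
        intro r
        induction r with
        | zero => exact fun ε δ _ => funext fun i => i.elim0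
        | succ r ih =>
          intro ε δ h
          simp only [List.ofFn_succ', List.prod_concat, Fin.val_last, Fin.coe_castSucc] at h
          cases hε : ε (Fin.last r) <;> cases hδ : δ (Fin.last r) <;> rw [hε, hδ] at h <;>
            simp only [if_true, if_false, Bool.false_eq_true, ite_false, ite_true, mul_one] at h
          · -- false, false
            have h' := @ih (fun i => ε i.castSucc) (fun i => δ i.castSucc) h
            funext i
            refine Fin.lastCases (by rw [hε, hδ]) (fun j => ?_) i
            exact congrFun h' j
          · -- false, true : prefix ε = prefix δ * gs r
            exfalso
            apply hg2 r
            have hmem : gs r = (List.ofFn fun i : Fin r =>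
                if δ i.castSucc then gs (i : ℕ) else 1).prod⁻¹ *
                (List.ofFn fun i : Fin r => if ε i.castSucc then gs (i : ℕ) else 1).prod := by
              rw [h]; group
            rw [hmem]
            exact Subgroup.mul_mem _ (Subgroup.inv_mem _ (hpre r δ)) (hpre r ε)
          · -- true, false
            exfalso
            apply hg2 r
            have hmem : gs r = (List.ofFn fun i : Fin r =>
                if ε i.castSucc then gs (i : ℕ) else 1).prod⁻¹ *
                (List.ofFn fun i : Fin r => if δ i.castSucc then gs (i : ℕ) else 1).prod := by
              rw [← h]; group
            rw [hmem]
            exact Subgroup.mul_mem _ (Subgroup.inv_mem _ (hpre r ε)) (hpre r δ)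
          · -- true, true
            have h' := @ih (fun i => ε i.castSucc) (fun i => δ i.castSucc) (mul_right_cancel h)
            funext i
            refine Fin.lastCases (by rw [hε, hδ]) (fun j => ?_) i
            exact congrFun h' j
      -- length bounds
      have hglen : ∀ m : ℕ, wordLength (A : Set G) (gs m) ≤ (m + 1) * T + R + (m + 1) * T := by
        intro m
        obtain ⟨j, hj, x, hx, hq⟩ := hg1 m
        rw [hq]
        have e1 := wordLength_mul_le hA (t ^ j * x) (t ^ (-j))
        have e2 := wordLength_mul_le hA (t ^ j) x
        have e3 := wordLength_zpow_le hA t j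
        have e4 := wordLength_zpow_le hA t (-j)
        have e5 : wordLength (A : Set G) x ≤ R := hUR x hx
        have e6 : j.natAbs * T ≤ (m + 1) * T := Nat.mul_le_mul_right _ hj
        have e7 : (-j).natAbs * T ≤ (m + 1) * T :=
          Nat.mul_le_mul_right _ (by rw [Int.natAbs_neg]; exact hj)
        rw [← hT] at e3 e4
        omega
      have hlenF : ∀ r : ℕ, ∀ ε : Fin r → Bool,
          wordLength (A : Set G) ((List.ofFn fun i => if ε i then gs (i : ℕ) else 1).prod)
            ≤ r * (r * T + R + r * T) := by
        intro r ε
        have := wordLength_list_prod_le hA (List.ofFn fun i => if ε i then gs (i : ℕ) else 1)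
          (r * T + R + r * T) ?_
        · simpa using this
        · intro x hx
          rw [List.mem_ofFn] at hx
          obtain ⟨i, rfl⟩ := hx
          try dsimp only
          split
          · have h8 := hglen (i : ℕ)
            have h9 : ((i : ℕ) + 1) * T ≤ r * T := Nat.mul_le_mul_right _ i.2
            omega
          · rw [wordLength_one]; omega
      -- counting contradiction
      obtain ⟨r, hr1, hr2⟩ := exists_exp_gt (2 * d) (C * (2 * T + R + 1) ^ d)
      have hcard : 2 ^ r ≤ growth (A : Set G) (r * (r * T + R + r * T)) := by
        have h10 := le_growth hA A.finite_toSet _ (hInj r) (r * (r * T + R + r * T))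
          (fun ε => hlenF r ε)
        calc (2 : ℕ) ^ r = Nat.card (Fin r → Bool) := by
              simp [Nat.card_eq_fintype_card]
          _ ≤ _ := h10
      have hrn1 : 1 ≤ r * (r * T + R + r * T) + 0 + r := by omega
      have hb := hgrow (r * (r * T + R + r * T) + r) (by omega)
      have hmono : growth (A : Set G) (r * (r * T + R + r * T)) ≤
          growth (A : Set G) (r * (r * T + R + r * T) + r) := by
        apply Nat.card_mono (ball_finite hA A.finite_toSet _)
        intro x hx
        have hx' : wordLength (A : Set G) x ≤ r * (r * T + R + r * T) := hx
        show wordLength (A : Set G) x ≤ _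
        omega
      have hle2 : r * (r * T + R + r * T) + r ≤ (2 * T + R + 1) * r ^ 2 := by
        have hrr : r ≤ r * r := Nat.le_mul_of_pos_left r (by omega)
        have hrR : r * R ≤ r * r * R := Nat.mul_le_mul_right R hrr
        ring_nf
        nlinarith [hrr, hrR]
      have hfinal : 2 ^ r ≤ C * (2 * T + R + 1) ^ d * r ^ (2 * d) := by
        calc (2 : ℕ) ^ r ≤ growth (A : Set G) (r * (r * T + R + r * T) + r) :=
              hcard.trans hmono
          _ ≤ C * (r * (r * T + R + r * T) + r) ^ d := hb
          _ ≤ C * ((2 * T + R + 1) * r ^ 2) ^ d :=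
              Nat.mul_le_mul_left _ (Nat.pow_le_pow_left hle2 d)
          _ = C * (2 * T + R + 1) ^ d * r ^ (2 * d) := by
              rw [mul_pow, ← pow_mul, mul_assoc]
      omega
  refine ⟨hFG, ?_⟩
  -- Part 2: growth of N
  intro B hB
  set LB := B.sup (fun b => wordLength (A : Set G) (b : G)) with hLB
  have hembed : ∀ x : N, wordLength (A : Set G) (x : G) ≤ wordLength (B : Set N) x * LB := by
    intro x
    obtain ⟨l, hl, hlen, hp⟩ := exists_min_rep hB x
    have h1 : (x : G) = (l.map N.subtype).prod := by
      rw [← hp]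
      exact map_list_prod N.subtype l
    rw [h1]
    have h2 := wordLength_list_prod_le hA (l.map N.subtype) LB ?_
    · calc wordLength (A : Set G) (l.map N.subtype).prod ≤ (l.map N.subtype).length * LB := h2
        _ = wordLength (B : Set N) x * LB := by rw [List.length_map, hlen]
    · intro y hy
      obtain ⟨z, hz, rfl⟩ := List.mem_map.mp hy
      rcases hl z hz with h | h
      · exact Finset.le_sup (f := fun b : N => wordLength (A : Set G) (b : G)) h
      · have h3 : wordLength (A : Set G) ((z : G))⁻¹ ≤ LB := by
          have h5 := Finset.le_sup (f := fun b : N => wordLength (A : Set G) (b : G)) h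
          simpa using h5
        calc wordLength (A : Set G) (N.subtype z) = wordLength (A : Set G) (((z : G))⁻¹)⁻¹ := by
              simp
          _ ≤ wordLength (A : Set G) ((z : G))⁻¹ := wordLength_inv_le hA _
          _ ≤ LB := h3
  set M := T + LB + 1 with hM
  refine ⟨C * M ^ d, by positivity, ?_⟩
  intro n hn
  haveI : Finite {x : N | wordLength (B : Set N) x ≤ n} :=
    (ball_finite hB B.finite_toSet n).to_subtype
  set f : Fin (n + 1) × {x : N | wordLength (B : Set N) x ≤ n} → G :=
    fun p => t ^ (p.1 : ℕ) * ((p.2 : N) : G) with hf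
  have hinj : Function.Injective f := by
    rintro ⟨k₁, x₁⟩ ⟨k₂, x₂⟩ h
    simp only [hf] at h
    have hπ1 : π ((x₁ : N) : G) = 1 := (hker _).mpr (x₁ : N).2
    have hπ2 : π ((x₂ : N) : G) = 1 := (hker _).mpr (x₂ : N).2
    have h1 := congrArg π h
    rw [map_mul, map_mul, map_pow, map_pow, ht, hπ1, hπ2, mul_one, mul_one] at h1
    have h2 := congrArg Multiplicative.toAdd h1
    simp only [toAdd_pow, toAdd_ofAdd, nsmul_eq_mul, smul_eq_mul, mul_one] at h2
    have hk : k₁ = k₂ := Fin.ext (by exact_mod_cast h2)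
    subst hk
    have hx : x₁ = x₂ := Subtype.ext (Subtype.ext (mul_left_cancel h))
    rw [hx]
  have hflen : ∀ p, wordLength (A : Set G) (f p) ≤ n * M := by
    rintro ⟨k, x⟩
    simp only [hf]
    have e1 := wordLength_mul_le hA (t ^ (k : ℕ)) ((x : N) : G)
    have e2 := wordLength_pow_le hA t (k : ℕ)
    rw [← hT] at e2
    have e3 : (k : ℕ) * T ≤ n * T := Nat.mul_le_mul_right _ (Nat.lt_succ_iff.mp k.2)
    have e4 := hembed (x : N)
    have e5 : wordLength (B : Set N) (x : N) ≤ n := x.2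
    have e6 : wordLength (B : Set N) (x : N) * LB ≤ n * LB := Nat.mul_le_mul_right _ e5
    have e7 : n * T + n * LB ≤ n * M := by
      have h5 : n * (T + LB) ≤ n * M := Nat.mul_le_mul_left _ (by omega)
      rw [Nat.mul_add] at h5
      exact h5
    omega
  have hcount := le_growth hA A.finite_toSet f hinj (n * M) hflen
  rw [Nat.card_prod] at hcount
  have hfin' : Nat.card (Fin (n + 1)) = n + 1 := by simp [Nat.card_eq_fintype_card]
  rw [hfin'] at hcount
  have hnM : 1 ≤ n * M := by
    have : 1 ≤ M := by omega
    nlinarith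
  have hup := hgrow (n * M) hnM
  have htot : (n + 1) * growth (B : Set N) n ≤ C * M ^ d * n ^ d := by
    calc (n + 1) * growth (B : Set N) n ≤ growth (A : Set G) (n * M) := hcount
      _ ≤ C * (n * M) ^ d := hup
      _ = C * M ^ d * n ^ d := by rw [mul_pow]; ring
  cases d with
  | zero =>
    have h6 : growth (B : Set N) n ≤ (n + 1) * growth (B : Set N) n :=
      Nat.le_mul_of_pos_left _ (by omega)
    simpa using h6.trans htot
  | succ e =>
    have h1 : growth (B : Set N) n * n ≤ (C * M ^ (e + 1) * n ^ e) * n := by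
      calc growth (B : Set N) n * n = n * growth (B : Set N) n := by ring
        _ ≤ (n + 1) * growth (B : Set N) n := Nat.mul_le_mul_right _ (by omega)
        _ ≤ C * M ^ (e + 1) * n ^ (e + 1) := htot
        _ = (C * M ^ (e + 1) * n ^ e) * n := by ring
    have h2 := Nat.le_of_mul_le_mul_right h1 (by omega : 0 < n)
    simpa using h2
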